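/- (Uniqueness part of Sklar's theorem, Theorem 1.) Let ℓ ≥ 1 and let S : Ω → (Fin ℓ → ℝ) be a random vector on a probability space (Ω, P) such that each marginal cdf F_l(t) = P(S_l ≤ t) is continuous. If C₁, C₂ : (Fin ℓ → ℝ) → ℝ both satisfy P(∀ l, S_l ≤ s_l) = C_j(F_1(s_1), …, F_ℓ(s_ℓ)) for all s ∈ ℝ^ℓ (j = 1, 2), then C₁(u) = C₂(u) for every u with u_l ∈ (0,1) for all l. -/

import Mathlib

open MeasureTheory

/-- Uniqueness part of Sklar's theorem: when the marginal cdfs are continuous,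
any two copulas representing the joint cdf agree on `(0,1)^ℓ`. -/
theorem sklar_uniqueness
    {Ω : Type*} [MeasurableSpace Ω] (P : Measure Ω) [IsProbabilityMeasure P]
    (ℓ : ℕ) (hℓ : 1 ≤ ℓ)
    (S : Ω → Fin ℓ → ℝ) (hS : Measurable S)
    (F : Fin ℓ → ℝ → ℝ)
    (hF : ∀ l t, F l t = (P {ω | S ω l ≤ t}).toReal)
    (hFcont : ∀ l, Continuous (F l))
    (C₁ C₂ : (Fin ℓ → ℝ) → ℝ)
    (h₁ : ∀ s : Fin ℓ → ℝ,
      (P {ω | ∀ l, S ω l ≤ s l}).toReal = C₁ (fun l => F l (s l)))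
    (h₂ : ∀ s : Fin ℓ → ℝ,
      (P {ω | ∀ l, S ω l ≤ s l}).toReal = C₂ (fun l => F l (s l))) :
    ∀ u : Fin ℓ → ℝ, (∀ l, u l ∈ Set.Ioo (0 : ℝ) 1) → C₁ u = C₂ u := by
  intro u hu
  -- For each l, find s l with F l (s l) = u l.
  have hsurj : ∀ l, ∃ t, F l t = u l := by
    intro l
    have hmeas : Measurable fun ω => S ω l := (measurable_pi_apply l).comp hS
    set μ : Measure ℝ := P.map (fun ω => S ω l) with hμ
    have : IsProbabilityMeasure μ := Measure.isProbabilityMeasure_map hmeas.aemeasurable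
    have hFeq : ∀ t, F l t = ProbabilityTheory.cdf μ t := by
      intro t
      rw [hF, ProbabilityTheory.cdf_eq_real, measureReal_def, hμ,
        Measure.map_apply hmeas measurableSet_Iic]
      rfl
    have hbot : Filter.Tendsto (F l) Filter.atBot (nhds 0) := by
      simpa [funext hFeq] using ProbabilityTheory.tendsto_cdf_atBot μ
    have htop : Filter.Tendsto (F l) Filter.atTop (nhds 1) := by
      simpa [funext hFeq] using ProbabilityTheory.tendsto_cdf_atTop μ
    obtain ⟨a, ha⟩ := (hbot.eventually (eventually_lt_nhds (hu l).1)).exists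
    obtain ⟨b, hb⟩ := (htop.eventually (eventually_gt_nhds (hu l).2)).exists
    have : u l ∈ Set.range (F l) :=
      intermediate_value_univ a b (hFcont l) ⟨ha.le, hb.le⟩
    exact this
  choose s hs using hsurj
  have hsu : (fun l => F l (s l)) = u := funext hs
  have := (h₁ s).symm.trans (h₂ s)
  rwa [hsu] at this
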